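/- Let G be a finite group such that for every normal subgroup M of G for which the quotient G/M is subdirectly irreducible, G/M is abelian, neutral, or almost neutral. Then for every relevant triple (D, T, N) of G there exist normal subgroups A and B of G such that B ≤ D, A ⊓ B = ⊥, A ⊔ B = N, and A is commutative. -/

import Mathlib

open scoped commutatorElement

/-- In the lattice of normal subgroups of a group `G`, `(D, T, N)` is a *relevant triple* if:
`D` is completely meet-irreducible with unique upper cover `T`, the prime quotient `T/D`
is abelian (`⁅T, T⁆ ≤ D`), and `N` is the largest normal subgroup with `⁅T, N⁆ ≤ D`
(the centralizer `(D : T)`). -/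
def RelevantTriple {G : Type*} [Group G] (D T N : Subgroup G) : Prop :=
  D.Normal ∧ T.Normal ∧ N.Normal ∧
  D < T ∧ (∀ X : Subgroup G, X.Normal → D < X → T ≤ X) ∧
  ⁅T, T⁆ ≤ D ∧
  ⁅T, N⁆ ≤ D ∧ (∀ N' : Subgroup G, N'.Normal → ⁅T, N'⁆ ≤ D → N' ≤ N)

/-- The quotient `G/M` is subdirectly irreducible: the intersection of all normal subgroups
of `G` strictly containing `M` strictly contains `M`. -/
def QuotSubdirectlyIrreducible {G : Type*} [Group G] (M : Subgroup G) : Prop :=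
  M < sInf {X : Subgroup G | X.Normal ∧ M < X}

/-- A group `Q` is *neutral* if `⁅X, Y⁆ = X ⊓ Y` for all normal subgroups `X, Y` of `Q`. -/
def IsNeutral (Q : Type*) [Group Q] : Prop :=
  ∀ X Y : Subgroup Q, X.Normal → Y.Normal → ⁅X, Y⁆ = X ⊓ Y

/-- A subdirectly irreducible group `Q` with monolith `μ` is *almost neutral* if `Q` is
nonabelian, `μ` is the largest normal subgroup `C` with `⁅μ, C⁆ = 1`, and the interval of
normal subgroups above `μ` is neutral. -/
def IsAlmostNeutral (Q : Type*) [Group Q] : Prop :=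
  (¬ ∀ x y : Q, x * y = y * x) ∧
  ∃ μ : Subgroup Q, μ.Normal ∧ ⊥ < μ ∧
    (∀ X : Subgroup Q, X.Normal → ⊥ < X → μ ≤ X) ∧
    ⁅μ, μ⁆ = ⊥ ∧ (∀ C : Subgroup Q, C.Normal → ⁅μ, C⁆ = ⊥ → C ≤ μ) ∧
    (∀ X Y : Subgroup Q, X.Normal → Y.Normal → X ≤ Y → μ ≤ X → ⁅Y, Y⁆ ≤ X → X = Y)

/-- The quotient `G/M` is abelian. -/
def QuotAbelian {G : Type*} [Group G] (M : Subgroup G) (hM : M.Normal) : Prop :=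
  haveI := hM
  ∀ x y : G ⧸ M, x * y = y * x

/-- The quotient `G/M` is neutral. -/
def QuotNeutral {G : Type*} [Group G] (M : Subgroup G) (hM : M.Normal) : Prop :=
  haveI := hM
  IsNeutral (G ⧸ M)

/-- The quotient `G/M` is almost neutral. -/
def QuotAlmostNeutral {G : Type*} [Group G] (M : Subgroup G) (hM : M.Normal) : Prop :=
  haveI := hM
  IsAlmostNeutral (G ⧸ M)

section Core
variable {G : Type*} [Group G]

private lemma normal_inf' {H K : Subgroup G} (hH : H.Normal) (hK : K.Normal) :
    (H ⊓ K).Normal :=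
  ⟨fun x hx g => ⟨hH.conj_mem x hx.1 g, hK.conj_mem x hx.2 g⟩⟩

private lemma quotAbelian_commutator_le (M : Subgroup G) (hM : M.Normal)
    (h : QuotAbelian M hM) : ⁅(⊤ : Subgroup G), (⊤ : Subgroup G)⁆ ≤ M := by
  haveI := hM
  rw [Subgroup.commutator_le]
  intro g₁ _ g₂ _
  have h1 : ⁅g₁, g₂⁆ ∈ (QuotientGroup.mk' M).ker := by
    rw [MonoidHom.mem_ker, map_commutatorElement]
    exact commutatorElement_eq_one_iff_mul_comm.mpr (h _ _)
  rwa [QuotientGroup.ker_mk'] at h1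

private lemma split_step [Finite G]
    (hSI : ∀ (M : Subgroup G) (hM : M.Normal), QuotSubdirectlyIrreducible M →
      QuotAbelian M hM ∨ QuotNeutral M hM ∨ QuotAlmostNeutral M hM)
    (D N U A₁ B₁ : Subgroup G)
    (hUn : U.Normal) (hUbot : U ≠ ⊥)
    (hUmin : ∀ V : Subgroup G, V.Normal → V ≤ U → V ≠ ⊥ → V = U)
    (hUtop : U ≤ ⁅(⊤ : Subgroup G), (⊤ : Subgroup G)⁆)
    (hA₁ : A₁.Normal) (hB₁ : B₁.Normal)
    (hUA : U ≤ A₁) (hUB : U ≤ B₁) (hBD : B₁ ≤ D)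
    (hInt : A₁ ⊓ B₁ ≤ U) (hJoin : A₁ ⊔ B₁ = N)
    (hCommA : ⁅A₁, A₁⁆ ≤ U) :
    ∃ A B : Subgroup G, A.Normal ∧ B.Normal ∧ B ≤ D ∧ A ⊓ B = ⊥ ∧ A ⊔ B = N ∧
      (∀ a b : G, a ∈ A → b ∈ A → a * b = b * a) := by
  classical
  -- choose M maximal among normal subgroups not containing U
  have wf : WellFounded ((· > ·) : Subgroup G → Subgroup G → Prop) := IsWellFounded.wf
  obtain ⟨M, hMS, hMmax'⟩ := wf.has_min {Y : Subgroup G | Y.Normal ∧ ¬ U ≤ Y}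
    ⟨⊥, inferInstance, by simpa [le_bot_iff] using hUbot⟩
  obtain ⟨hMn, hUM⟩ := hMS
  have hMmax : ∀ X : Subgroup G, X.Normal → M < X → U ≤ X := by
    intro X hXn hMX
    by_contra hUX
    exact hMmax' X ⟨hXn, hUX⟩ hMX
  haveI := hMn
  have hsurj : Function.Surjective (QuotientGroup.mk' M) := QuotientGroup.mk'_surjective M
  -- M is a subdirectly irreducible point
  have hQSI : QuotSubdirectlyIrreducible M := by
    have h1 : M < M ⊔ U := left_lt_sup.mpr hUM
    refine lt_of_lt_of_le h1 (le_sInf ?_)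
    rintro X ⟨hXn, hMX⟩
    exact sup_le hMX.le (hMmax X hXn hMX)
  -- in each possible case, A₁ ≤ U ⊔ M
  have hUMbot : U ⊓ M = ⊥ := by
    by_contra hne
    have := hUmin (U ⊓ M) (normal_inf' hUn hMn) inf_le_left hne
    exact hUM (by rw [← this]; exact inf_le_right)
  have hA1UM : A₁ ≤ U ⊔ M := by
    rcases hSI M hMn hQSI with hab | hneu | han
    · exact absurd (le_trans hUtop (quotAbelian_commutator_le M hMn hab)) hUM
    · have h1 : ⁅Subgroup.map (QuotientGroup.mk' M) A₁, Subgroup.map (QuotientGroup.mk' M) A₁⁆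
          = Subgroup.map (QuotientGroup.mk' M) A₁ := by
        rw [hneu _ _ (hA₁.map _ hsurj) (hA₁.map _ hsurj), inf_idem]
      have h2 : Subgroup.map (QuotientGroup.mk' M) A₁ ≤ Subgroup.map (QuotientGroup.mk' M) U := by
        rw [← h1, ← Subgroup.map_commutator]
        exact Subgroup.map_mono hCommA
      calc A₁ ≤ Subgroup.comap (QuotientGroup.mk' M)
            (Subgroup.map (QuotientGroup.mk' M) A₁) := Subgroup.le_comap_map _ _
        _ ≤ Subgroup.comap (QuotientGroup.mk' M)
            (Subgroup.map (QuotientGroup.mk' M) U) := Subgroup.comap_mono h2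
        _ = U ⊔ M := by rw [Subgroup.comap_map_eq, QuotientGroup.ker_mk']
    · obtain ⟨-, μ, hμn, hμbot, hμmin, -, -, hμint⟩ := han
      have hUmapbot : Subgroup.map (QuotientGroup.mk' M) U ≠ ⊥ := by
        rw [Ne, Subgroup.map_eq_bot_iff, QuotientGroup.ker_mk']
        exact hUM
      have hμU : μ ≤ Subgroup.map (QuotientGroup.mk' M) U :=
        hμmin _ (hUn.map _ hsurj) (bot_lt_iff_ne_bot.mpr hUmapbot)
      have h3 : Subgroup.map (QuotientGroup.mk' M) U = Subgroup.map (QuotientGroup.mk' M) A₁ :=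
        hμint _ _ (hUn.map _ hsurj) (hA₁.map _ hsurj) (Subgroup.map_mono hUA) hμU
          (by rw [← Subgroup.map_commutator]; exact Subgroup.map_mono hCommA)
      calc A₁ ≤ Subgroup.comap (QuotientGroup.mk' M)
            (Subgroup.map (QuotientGroup.mk' M) A₁) := Subgroup.le_comap_map _ _
        _ = Subgroup.comap (QuotientGroup.mk' M)
            (Subgroup.map (QuotientGroup.mk' M) U) := by rw [h3]
        _ = U ⊔ M := by rw [Subgroup.comap_map_eq, QuotientGroup.ker_mk']
  -- now split
  refine ⟨A₁ ⊓ M, B₁, normal_inf' hA₁ hMn, hB₁, hBD, ?_, ?_, ?_⟩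
  · rw [eq_bot_iff, ← hUMbot]
    exact le_inf (le_trans (inf_le_inf_right _ inf_le_left) hInt) (le_trans inf_le_left inf_le_right)
  · have hA1eq : (A₁ ⊓ M) ⊔ U = A₁ := by
      apply le_antisymm (sup_le inf_le_left hUA)
      intro x hx
      have hx' : x ∈ (↑(U ⊔ M) : Set G) := hA1UM hx
      rw [Subgroup.mul_normal U M] at hx'
      obtain ⟨u, hu, m, hm, hx2⟩ := hx'
      have hmA : m ∈ A₁ := by
        have h5 : u⁻¹ * x ∈ A₁ := A₁.mul_mem (A₁.inv_mem (hUA hu)) hx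
        rw [← hx2] at h5
        simpa using h5
      have : x = u * m := hx2.symm
      rw [this]
      exact Subgroup.mul_mem _ ((le_sup_right : U ≤ (A₁ ⊓ M) ⊔ U) hu)
        ((le_sup_left : A₁ ⊓ M ≤ (A₁ ⊓ M) ⊔ U) ⟨hmA, hm⟩)
    calc (A₁ ⊓ M) ⊔ B₁ = (A₁ ⊓ M) ⊔ (U ⊔ B₁) := by rw [sup_eq_right.mpr hUB]
      _ = ((A₁ ⊓ M) ⊔ U) ⊔ B₁ := by rw [sup_assoc]
      _ = A₁ ⊔ B₁ := by rw [hA1eq]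
      _ = N := hJoin
  · intro a b ha hb
    have h6 : ⁅a, b⁆ ∈ U ⊓ M := by
      constructor
      · exact hCommA (Subgroup.commutator_mem_commutator ha.1 hb.1)
      · have : ⁅a, b⁆ = a * b * a⁻¹ * b⁻¹ := rfl
        rw [this]
        exact M.mul_mem (M.mul_mem (M.mul_mem ha.2 hb.2) (M.inv_mem ha.2)) (M.inv_mem hb.2)
    rw [hUMbot, Subgroup.mem_bot] at h6
    exact commutatorElement_eq_one_iff_mul_comm.mp h6

end Core
section Equiv
variable {Q₁ Q₂ : Type*} [Group Q₁] [Group Q₂]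

private lemma map_map_symm (e : Q₁ ≃* Q₂) (Y : Subgroup Q₂) :
    (Y.map e.symm.toMonoidHom).map e.toMonoidHom = Y := by
  rw [Subgroup.map_map]
  have h : e.toMonoidHom.comp e.symm.toMonoidHom = MonoidHom.id Q₂ :=
    MonoidHom.ext fun x => e.apply_symm_apply x
  rw [h, Subgroup.map_id]

private lemma map_symm_map (e : Q₁ ≃* Q₂) (X : Subgroup Q₁) :
    (X.map e.toMonoidHom).map e.symm.toMonoidHom = X := by
  have := map_map_symm e.symm X
  rwa [MulEquiv.symm_symm] at this

private lemma isNeutral_of_mulEquiv (e : Q₁ ≃* Q₂) (h : IsNeutral Q₂) : IsNeutral Q₁ := by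
  intro X Y hX hY
  apply Subgroup.map_injective (f := e.toMonoidHom) e.injective
  rw [Subgroup.map_commutator, Subgroup.map_inf X Y e.toMonoidHom e.injective]
  exact h _ _ (hX.map _ e.surjective) (hY.map _ e.surjective)

private lemma isAlmostNeutral_of_mulEquiv (e : Q₁ ≃* Q₂) (h : IsAlmostNeutral Q₂) :
    IsAlmostNeutral Q₁ := by
  obtain ⟨hna, μ, hμn, hμbot, hμmin, hμab, hμcent, hμint⟩ := h
  constructor
  · intro hc
    exact hna fun x y => by
      have h1 := hc (e.symm x) (e.symm y)
      have h2 := congrArg e h1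
      simpa [map_mul] using h2
  refine ⟨μ.map e.symm.toMonoidHom, hμn.map _ e.symm.surjective, ?_, ?_, ?_, ?_, ?_⟩
  · rw [bot_lt_iff_ne_bot]
    intro hb
    have := congrArg (Subgroup.map e.toMonoidHom) hb
    rw [map_map_symm, Subgroup.map_bot] at this
    exact hμbot.ne' this
  · intro X hXn hXbot
    have h1 : ⊥ < X.map e.toMonoidHom := by
      rw [bot_lt_iff_ne_bot]
      intro hb
      exact hXbot.ne' (Subgroup.map_injective (f := e.toMonoidHom) e.injective (by rw [hb, Subgroup.map_bot]))
    have h2 := hμmin _ (hXn.map _ e.surjective) h1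
    have h3 := Subgroup.map_mono (f := e.symm.toMonoidHom) h2
    rwa [map_symm_map] at h3
  · apply Subgroup.map_injective (f := e.toMonoidHom) e.injective
    rw [Subgroup.map_commutator, map_map_symm, Subgroup.map_bot, hμab]
  · intro C hCn hCc
    have h1 : ⁅μ, C.map e.toMonoidHom⁆ = ⊥ := by
      have := congrArg (Subgroup.map e.toMonoidHom) hCc
      rwa [Subgroup.map_commutator, map_map_symm, Subgroup.map_bot] at this
    have h2 := hμcent _ (hCn.map _ e.surjective) h1
    have h3 := Subgroup.map_mono (f := e.symm.toMonoidHom) h2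
    rwa [map_symm_map] at h3
  · intro X Y hXn hYn hXY hμX hYX
    apply Subgroup.map_injective (f := e.toMonoidHom) e.injective
    refine hμint _ _ (hXn.map _ e.surjective) (hYn.map _ e.surjective)
      (Subgroup.map_mono hXY) ?_ ?_
    · have := Subgroup.map_mono (f := e.toMonoidHom) hμX
      rwa [map_map_symm] at this
    · rw [← Subgroup.map_commutator]
      exact Subgroup.map_mono hYX

end Equiv

universe u

private lemma aux_split : ∀ (n : ℕ) (G : Type u) [Group G] [Finite G],
    (∀ (M : Subgroup G) (hM : M.Normal), QuotSubdirectlyIrreducible M →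
      QuotAbelian M hM ∨ QuotNeutral M hM ∨ QuotAlmostNeutral M hM) →
    ∀ D T N : Subgroup G, RelevantTriple D T N → Nat.card G ≤ n →
    ∃ A B : Subgroup G, A.Normal ∧ B.Normal ∧ B ≤ D ∧ A ⊓ B = ⊥ ∧ A ⊔ B = N ∧
      (∀ a b : G, a ∈ A → b ∈ A → a * b = b * a) := by
  intro n
  induction n with
  | zero =>
    intro G _ _ _ _ _ _ _ hcard
    exact absurd (Nat.le_zero.mp hcard) Nat.card_pos.ne'
  | succ n ih =>
    intro G _ _ hSI D T N h hcard
    obtain ⟨hDn, hTn, hNn, hDT, hcov, hTT, hTN, hNmax⟩ := h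
    haveI := hDn; haveI := hTn; haveI := hNn
    have hTleN : T ≤ N := hNmax T hTn hTT
    -- D is a subdirectly irreducible point
    have hQSID : QuotSubdirectlyIrreducible D :=
      lt_of_lt_of_le hDT (le_sInf fun X hX => hcov X hX.1 hX.2)
    have hsurjD : Function.Surjective (QuotientGroup.mk' D) := QuotientGroup.mk'_surjective D
    -- N is abelian over D
    have hND : ⁅N, N⁆ ≤ D := by
      rcases hSI D hDn hQSID with hab | hneu | han
      · exact le_trans (Subgroup.commutator_mono le_top le_top) (quotAbelian_commutator_le D hDn hab)
      · exfalso
        have h1 : ⁅Subgroup.map (QuotientGroup.mk' D) T, Subgroup.map (QuotientGroup.mk' D) T⁆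
            = Subgroup.map (QuotientGroup.mk' D) T := by
          rw [hneu _ _ (hTn.map _ hsurjD) (hTn.map _ hsurjD), inf_idem]
        have h2 : Subgroup.map (QuotientGroup.mk' D) T ≤ ⊥ := by
          rw [← h1, ← Subgroup.map_commutator]
          calc Subgroup.map (QuotientGroup.mk' D) ⁅T, T⁆
              ≤ Subgroup.map (QuotientGroup.mk' D) D := Subgroup.map_mono hTT
            _ ≤ ⊥ := le_of_eq ((Subgroup.map_eq_bot_iff _).mpr
                (le_of_eq (QuotientGroup.ker_mk' D).symm))
        have h3 : T ≤ D := by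
          have := (Subgroup.map_eq_bot_iff _).mp (le_bot_iff.mp h2)
          rwa [QuotientGroup.ker_mk'] at this
        exact hDT.not_ge h3
      · obtain ⟨-, μ, hμn, hμbot, hμmin, -, hμcent, -⟩ := han
        have hTmapbot : Subgroup.map (QuotientGroup.mk' D) T ≠ ⊥ := by
          rw [Ne, Subgroup.map_eq_bot_iff, QuotientGroup.ker_mk']
          exact hDT.not_ge
        have hμT : μ ≤ Subgroup.map (QuotientGroup.mk' D) T :=
          hμmin _ (hTn.map _ hsurjD) (bot_lt_iff_ne_bot.mpr hTmapbot)
        have hDbot : Subgroup.map (QuotientGroup.mk' D) D = ⊥ :=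
          (Subgroup.map_eq_bot_iff _).mpr (le_of_eq (QuotientGroup.ker_mk' D).symm)
        have h4 : ⁅μ, Subgroup.map (QuotientGroup.mk' D) N⁆ = ⊥ := by
          rw [eq_bot_iff]
          calc ⁅μ, Subgroup.map (QuotientGroup.mk' D) N⁆
              ≤ ⁅Subgroup.map (QuotientGroup.mk' D) T, Subgroup.map (QuotientGroup.mk' D) N⁆ :=
                Subgroup.commutator_mono hμT le_rfl
            _ = Subgroup.map (QuotientGroup.mk' D) ⁅T, N⁆ := (Subgroup.map_commutator _ _ _).symm
            _ ≤ Subgroup.map (QuotientGroup.mk' D) D := Subgroup.map_mono hTN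
            _ ≤ ⊥ := le_of_eq hDbot
        have h5 : Subgroup.map (QuotientGroup.mk' D) N ≤ Subgroup.map (QuotientGroup.mk' D) T :=
          le_trans (hμcent _ (hNn.map _ hsurjD) h4) hμT
        have h6 : N ≤ T := by
          calc N ≤ Subgroup.comap (QuotientGroup.mk' D)
                (Subgroup.map (QuotientGroup.mk' D) N) := Subgroup.le_comap_map _ _
            _ ≤ Subgroup.comap (QuotientGroup.mk' D)
                (Subgroup.map (QuotientGroup.mk' D) T) := Subgroup.comap_mono h5
            _ = T ⊔ D := by rw [Subgroup.comap_map_eq, QuotientGroup.ker_mk']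
            _ = T := sup_eq_left.mpr hDT.le
        have h7 : N = T := le_antisymm h6 hTleN
        rw [h7]; exact hTT
    by_cases hNNbot : ⁅N, N⁆ = ⊥
    · refine ⟨N, ⊥, hNn, inferInstance, bot_le, inf_bot_eq N, sup_bot_eq N, ?_⟩
      intro a b ha hb
      have : ⁅a, b⁆ ∈ (⊥ : Subgroup G) := hNNbot ▸ Subgroup.commutator_mem_commutator ha hb
      rw [Subgroup.mem_bot] at this
      exact commutatorElement_eq_one_iff_mul_comm.mp this
    -- choose a minimal normal subgroup U below ⁅N, N⁆
    · have hNNn : (⁅N, N⁆ : Subgroup G).Normal := Subgroup.commutator_normal N N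
      have wf : WellFounded ((· < ·) : Subgroup G → Subgroup G → Prop) := IsWellFounded.wf
      obtain ⟨U, hUS, hUmin'⟩ := wf.has_min
        {V : Subgroup G | V.Normal ∧ V ≤ ⁅N, N⁆ ∧ V ≠ ⊥} ⟨⁅N, N⁆, hNNn, le_rfl, hNNbot⟩
      obtain ⟨hUn, hUNN, hUbot⟩ := hUS
      have hUmin : ∀ V : Subgroup G, V.Normal → V ≤ U → V ≠ ⊥ → V = U := by
        intro V hVn hVU hVbot
        by_contra hne
        exact hUmin' V ⟨hVn, hVU.trans hUNN, hVbot⟩ (lt_of_le_of_ne hVU hne)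
      have hUD : U ≤ D := hUNN.trans hND
      have hUN : U ≤ N := hUNN.trans (Subgroup.commutator_le_right N N)
      have hUT : U ≤ T := hUD.trans hDT.le
      haveI := hUn
      have hsurjU : Function.Surjective (QuotientGroup.mk' U) := QuotientGroup.mk'_surjective U
      have hcomap_map : ∀ X : Subgroup G, U ≤ X →
          Subgroup.comap (QuotientGroup.mk' U) (Subgroup.map (QuotientGroup.mk' U) X) = X := by
        intro X hX
        rw [Subgroup.comap_map_eq, QuotientGroup.ker_mk', sup_eq_left.mpr hX]
      have hkerle : ∀ Xb : Subgroup (G ⧸ U), U ≤ Subgroup.comap (QuotientGroup.mk' U) Xb := by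
        intro Xb x hx
        have : (QuotientGroup.mk' U) x = 1 := by
          rw [← MonoidHom.mem_ker, QuotientGroup.ker_mk']; exact hx
        rw [Subgroup.mem_comap, this]
        exact Xb.one_mem
      -- cardinality decreases
      have hcard' : Nat.card (G ⧸ U) ≤ n := by
        have h1 : Nat.card G = Nat.card (G ⧸ U) * Nat.card U :=
          Subgroup.card_eq_card_quotient_mul_card_subgroup U
        have h2 : 1 < Nat.card U := Finite.one_lt_card_iff_nontrivial.mpr
          ((Subgroup.nontrivial_iff_ne_bot U).mpr hUbot)
        have h3 : 0 < Nat.card (G ⧸ U) := Nat.card_pos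
        have h4 : Nat.card (G ⧸ U) < Nat.card G := by
          rw [h1]
          exact lt_mul_of_one_lt_right h3 h2
        omega
      -- transfer the SI hypothesis to G ⧸ U
      have hSIbar : ∀ (Mb : Subgroup (G ⧸ U)) (hMb : Mb.Normal), QuotSubdirectlyIrreducible Mb →
          QuotAbelian Mb hMb ∨ QuotNeutral Mb hMb ∨ QuotAlmostNeutral Mb hMb := by
        intro Mb hMb hQSIb
        have hMn : (Subgroup.comap (QuotientGroup.mk' U) Mb).Normal := hMb.comap _
        haveI := hMn
        have hUM : U ≤ Subgroup.comap (QuotientGroup.mk' U) Mb := hkerle Mb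
        have hmapM : Subgroup.map (QuotientGroup.mk' U) (Subgroup.comap (QuotientGroup.mk' U) Mb)
            = Mb := Subgroup.map_comap_eq_self_of_surjective hsurjU Mb
        have hQSIM : QuotSubdirectlyIrreducible (Subgroup.comap (QuotientGroup.mk' U) Mb) := by
          have hlt : Subgroup.comap (QuotientGroup.mk' U) Mb < Subgroup.comap (QuotientGroup.mk' U)
              (sInf {X : Subgroup (G ⧸ U) | X.Normal ∧ Mb < X}) := by
            refine lt_of_le_of_ne (Subgroup.comap_mono hQSIb.le) fun heq => hQSIb.ne ?_
            have h1 := congrArg (Subgroup.map (QuotientGroup.mk' U)) heq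
            rwa [Subgroup.map_comap_eq_self_of_surjective hsurjU,
              Subgroup.map_comap_eq_self_of_surjective hsurjU] at h1
          refine lt_of_lt_of_le hlt (le_sInf ?_)
          rintro X ⟨hXn, hMX⟩
          have hUX : U ≤ X := hUM.trans hMX.le
          have hMmapX : Mb < Subgroup.map (QuotientGroup.mk' U) X := by
            refine lt_of_le_of_ne ?_ fun heq => hMX.ne ?_
            · have h2 := Subgroup.map_mono (f := QuotientGroup.mk' U) hMX.le
              rwa [hmapM] at h2
            · have h2 := congrArg (Subgroup.comap (QuotientGroup.mk' U)) heq
              rwa [hcomap_map X hUX] at h2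
          have h9 : sInf {X : Subgroup (G ⧸ U) | X.Normal ∧ Mb < X}
              ≤ Subgroup.map (QuotientGroup.mk' U) X :=
            sInf_le ⟨hXn.map _ hsurjU, hMmapX⟩
          have h10 := Subgroup.comap_mono (f := QuotientGroup.mk' U) h9
          rwa [hcomap_map X hUX] at h10
        haveI := hMb
        have e : ((G ⧸ U) ⧸ Mb) ≃* G ⧸ (Subgroup.comap (QuotientGroup.mk' U) Mb) :=
          (QuotientGroup.quotientMulEquivOfEq hmapM.symm).trans
            (QuotientGroup.quotientQuotientEquivQuotient U
              (Subgroup.comap (QuotientGroup.mk' U) Mb) hUM)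
        rcases hSI _ hMn hQSIM with hab | hneu | han
        · left
          intro x y
          exact e.injective (by rw [map_mul, map_mul]; exact hab _ _)
        · right; left
          exact isNeutral_of_mulEquiv e hneu
        · right; right
          exact isAlmostNeutral_of_mulEquiv e han
      -- transfer the relevant triple
      have htriple : RelevantTriple (Subgroup.map (QuotientGroup.mk' U) D)
          (Subgroup.map (QuotientGroup.mk' U) T) (Subgroup.map (QuotientGroup.mk' U) N) := by
        refine ⟨hDn.map _ hsurjU, hTn.map _ hsurjU, hNn.map _ hsurjU, ?_, ?_, ?_, ?_, ?_⟩
        · refine lt_of_le_of_ne (Subgroup.map_mono hDT.le) fun heq => hDT.ne ?_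
          have h1 := congrArg (Subgroup.comap (QuotientGroup.mk' U)) heq
          rwa [hcomap_map D hUD, hcomap_map T hUT] at h1
        · intro Xb hXbn hltb
          have hDX : D < Subgroup.comap (QuotientGroup.mk' U) Xb := by
            refine lt_of_le_of_ne ?_ fun heq => hltb.ne ?_
            · have h2 := Subgroup.comap_mono (f := QuotientGroup.mk' U) hltb.le
              rwa [hcomap_map D hUD] at h2
            · rw [heq, Subgroup.map_comap_eq_self_of_surjective hsurjU]
          calc Subgroup.map (QuotientGroup.mk' U) T
              ≤ Subgroup.map (QuotientGroup.mk' U) (Subgroup.comap (QuotientGroup.mk' U) Xb) :=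
                Subgroup.map_mono (hcov _ (hXbn.comap _) hDX)
            _ = Xb := Subgroup.map_comap_eq_self_of_surjective hsurjU Xb
        · rw [← Subgroup.map_commutator]
          exact Subgroup.map_mono hTT
        · rw [← Subgroup.map_commutator]
          exact Subgroup.map_mono hTN
        · intro Nb' hNb'n hcb
          have h1 : ⁅T, Subgroup.comap (QuotientGroup.mk' U) Nb'⁆ ≤ D := by
            have h2 : Subgroup.map (QuotientGroup.mk' U) ⁅T, Subgroup.comap (QuotientGroup.mk' U) Nb'⁆
                ≤ Subgroup.map (QuotientGroup.mk' U) D := by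
              rw [Subgroup.map_commutator, Subgroup.map_comap_eq_self_of_surjective hsurjU]
              exact hcb
            calc ⁅T, Subgroup.comap (QuotientGroup.mk' U) Nb'⁆
                ≤ Subgroup.comap (QuotientGroup.mk' U) (Subgroup.map (QuotientGroup.mk' U)
                  ⁅T, Subgroup.comap (QuotientGroup.mk' U) Nb'⁆) := Subgroup.le_comap_map _ _
              _ ≤ Subgroup.comap (QuotientGroup.mk' U)
                  (Subgroup.map (QuotientGroup.mk' U) D) := Subgroup.comap_mono h2
              _ = D := hcomap_map D hUD
          have h3 := Subgroup.map_mono (f := QuotientGroup.mk' U)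
            (hNmax _ (hNb'n.comap _) h1)
          rwa [Subgroup.map_comap_eq_self_of_surjective hsurjU] at h3
      obtain ⟨Ab, Bb, hAbn, hBbn, hBbD, hABinf, hABsup, hAbcomm⟩ :=
        ih (G ⧸ U) hSIbar _ _ _ htriple hcard'
      -- pull the split back to G
      have hA₁n : (Subgroup.comap (QuotientGroup.mk' U) Ab).Normal := hAbn.comap _
      have hB₁n : (Subgroup.comap (QuotientGroup.mk' U) Bb).Normal := hBbn.comap _
      have hUA : U ≤ Subgroup.comap (QuotientGroup.mk' U) Ab := hkerle Ab
      have hUB : U ≤ Subgroup.comap (QuotientGroup.mk' U) Bb := hkerle Bb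
      have hB₁D : Subgroup.comap (QuotientGroup.mk' U) Bb ≤ D := by
        calc Subgroup.comap (QuotientGroup.mk' U) Bb
            ≤ Subgroup.comap (QuotientGroup.mk' U) (Subgroup.map (QuotientGroup.mk' U) D) :=
              Subgroup.comap_mono hBbD
          _ = D := hcomap_map D hUD
      have hInt : Subgroup.comap (QuotientGroup.mk' U) Ab ⊓ Subgroup.comap (QuotientGroup.mk' U) Bb
          ≤ U := by
        rw [← Subgroup.comap_inf, hABinf, MonoidHom.comap_bot, QuotientGroup.ker_mk']
      have hJoin : Subgroup.comap (QuotientGroup.mk' U) Ab ⊔ Subgroup.comap (QuotientGroup.mk' U) Bb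
          = N := by
        have h1 : Subgroup.map (QuotientGroup.mk' U) (Subgroup.comap (QuotientGroup.mk' U) Ab
            ⊔ Subgroup.comap (QuotientGroup.mk' U) Bb) = Subgroup.map (QuotientGroup.mk' U) N := by
          rw [Subgroup.map_sup, Subgroup.map_comap_eq_self_of_surjective hsurjU,
            Subgroup.map_comap_eq_self_of_surjective hsurjU, hABsup]
        have h2 := congrArg (Subgroup.comap (QuotientGroup.mk' U)) h1
        rwa [hcomap_map _ (hUA.trans le_sup_left), hcomap_map N hUN] at h2
      have hCommA : ⁅Subgroup.comap (QuotientGroup.mk' U) Ab,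
          Subgroup.comap (QuotientGroup.mk' U) Ab⁆ ≤ U := by
        have h1 : ⁅Ab, Ab⁆ ≤ ⊥ := by
          rw [Subgroup.commutator_le]
          intro a ha b hb
          rw [Subgroup.mem_bot]
          exact commutatorElement_eq_one_iff_mul_comm.mpr (hAbcomm a b ha hb)
        have h2 : Subgroup.map (QuotientGroup.mk' U) ⁅Subgroup.comap (QuotientGroup.mk' U) Ab,
            Subgroup.comap (QuotientGroup.mk' U) Ab⁆ = ⊥ := by
          rw [Subgroup.map_commutator, Subgroup.map_comap_eq_self_of_surjective hsurjU]
          exact le_bot_iff.mp h1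
        have h3 := (Subgroup.map_eq_bot_iff _).mp h2
        rwa [QuotientGroup.ker_mk'] at h3
      have hUtop : U ≤ ⁅(⊤ : Subgroup G), (⊤ : Subgroup G)⁆ :=
        hUNN.trans (Subgroup.commutator_mono le_top le_top)
      exact split_step hSI D N U _ _ hUn hUbot hUmin hUtop hA₁n hB₁n hUA hUB hB₁D hInt hJoin hCommA

/-- Let `G` be a finite group in which every subdirectly irreducible quotient is abelian,
neutral, or almost neutral. Then every relevant triple `(D, T, N)` of `G` is split: there
are normal subgroups `A` and `B` with `B ≤ D`, `A ⊓ B = ⊥`, `A ⊔ B = N`, and `A`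
commutative. -/
theorem relevant_triple_split
    {G : Type*} [Group G] [Finite G]
    (hSI : ∀ (M : Subgroup G) (hM : M.Normal), QuotSubdirectlyIrreducible M →
      QuotAbelian M hM ∨ QuotNeutral M hM ∨ QuotAlmostNeutral M hM)
    (D T N : Subgroup G) (h : RelevantTriple D T N) :
    ∃ A B : Subgroup G, A.Normal ∧ B.Normal ∧ B ≤ D ∧ A ⊓ B = ⊥ ∧ A ⊔ B = N ∧
      (∀ a b : G, a ∈ A → b ∈ A → a * b = b * a) :=
  aux_split (Nat.card G) G hSI D T N h le_rfl
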